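/- Let a and s be configurations such that (a,s) has finite queue lengths, and set d = D(a,s) and r = R(a,s). Then for all integers s₀ < t, min_{ℓ ∈ [s₀,t]} ( a[s₀,ℓ−1] + s[ℓ,t−1] ) = min_{ℓ ∈ [s₀,t]} ( r[s₀,ℓ−1] + d[ℓ,t−1] ), where sums over empty index ranges equal 0. -/

import Mathlib

open scoped BigOperators

/-- A particle configuration on `ℤ`: a `{0,1}`-valued function. -/
abbrev Config := ℤ → ℤ

/-- `x` takes only the values `0` and `1`. -/
def IsConfig (x : Config) : Prop := ∀ i, x i = 0 ∨ x i = 1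

/-- `x[i,j] = ∑_{k=i}^j x(k)` (zero if `j < i`). -/
noncomputable def cnt (x : Config) (i j : ℤ) : ℤ := ∑ k ∈ Finset.Icc i j, x k

/-- `(a,s)` has finite queue lengths. -/
def FinQ (a s : Config) : Prop :=
  ∀ i : ℤ, BddAbove {v : ℤ | ∃ j ≤ i, v = cnt a j i - cnt s j i}

/-- The queue length `Q_i(a,s) = sup_{j ≤ i} max(a[j,i] - s[j,i], 0)`. -/
noncomputable def queue (a s : Config) (i : ℤ) : ℤ :=
  sSup {q : ℤ | ∃ j ≤ i, q = max (cnt a j i - cnt s j i) 0}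

/-- The departure configuration `D(a,s)`. -/
noncomputable def dep (a s : Config) : Config := fun i =>
  if s i = 1 ∧ (0 < queue a s (i - 1) ∨ a i = 1) then 1 else 0

/-- The unused-service configuration `U(a,s)`. -/
noncomputable def unusedSrv (a s : Config) : Config := fun i =>
  if s i = 1 ∧ queue a s (i - 1) = 0 ∧ a i = 0 then 1 else 0

/-- `R(a,s)(i) = a(i) + U(a,s)(i)`. -/
noncomputable def Rmap (a s : Config) : Config := fun i => a i + unusedSrv a s i

/-- Truncation: `x_{n,0}(i) = x(i)` for `i ≥ n`, `0` otherwise. -/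
def trunc (x : Config) (n : ℤ) : Config := fun i => if n ≤ i then x i else 0

/-- Left-peeling tandem queue: `Dtandem x [s₁,…,s_k] = D(…D(D(x,s₁),s₂)…,s_k)`. -/
noncomputable def Dtandem : Config → List Config → Config
  | x, [] => x
  | x, s :: rest => Dtandem (dep x s) rest

/-- `DtandemList [x₁,…,xₙ] = Dⁿ(x₁,…,xₙ)`. -/
noncomputable def DtandemList : List Config → Config
  | [] => fun _ => 0
  | x :: rest => Dtandem x rest

/-- `DtandemN x = Dⁿ(x 0, …, x (n-1))`. -/
noncomputable def DtandemN {n : ℕ} (x : Fin n → Config) : Config :=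
  DtandemList (List.ofFn x)

/-- Every pair appearing as (arrivals, services) in the recursive definition of the
tandem departure map has finite queue lengths. -/
def TandemFinQ : List Config → Prop
  | [] => True
  | [_] => True
  | x :: s :: rest => FinQ x s ∧ TandemFinQ (dep x s :: rest)
  termination_by l => l.length

-- split lemma
lemma cnt_split (x : Config) {i j k : ℤ} (h1 : i ≤ j) (h2 : j ≤ k + 1) :
    cnt x i k = cnt x i (j - 1) + cnt x j k := by
  have e1 : ∀ l m : ℤ, Finset.Icc l m = Finset.Ioc (l - 1) m := by
    intro l m; ext z; simp only [Finset.mem_Icc, Finset.mem_Ioc]; omega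
  unfold cnt
  rw [e1, e1, e1, ← Finset.sum_union]
  · rw [Finset.Ioc_union_Ioc_eq_Ioc (by omega) (by omega)]
  · rw [Finset.disjoint_left]; intro z hz hz'
    simp only [Finset.mem_Ioc] at hz hz'; omega

lemma cnt_succ (x : Config) {j i : ℤ} (h : j ≤ i) :
    cnt x j i = cnt x j (i - 1) + x i := by
  have := cnt_split x (i := j) (j := i) (k := i) h (by omega)
  simpa [cnt] using this

section Queue
variable {a s : Config}

lemma queue_spec (hfq : FinQ a s) (i : ℤ) :
    (∃ j ≤ i, queue a s i = max (cnt a j i - cnt s j i) 0) ∧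
    (∀ j ≤ i, max (cnt a j i - cnt s j i) 0 ≤ queue a s i) := by
  set S := {q : ℤ | ∃ j ≤ i, q = max (cnt a j i - cnt s j i) 0} with hS
  have hne : S.Nonempty := ⟨_, i, le_refl i, rfl⟩
  have hbdd : BddAbove S := by
    obtain ⟨M, hM⟩ := hfq i
    refine ⟨max M 0, ?_⟩
    rintro q ⟨j, hj, rfl⟩
    exact max_le_max (hM ⟨j, hj, rfl⟩) le_rfl
  have hmem := Int.csSup_mem hne hbdd
  refine ⟨hmem, fun j hj => le_csSup hbdd ⟨j, hj, rfl⟩⟩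

lemma queue_nonneg (hfq : FinQ a s) (i : ℤ) : 0 ≤ queue a s i := by
  obtain ⟨-, h2⟩ := queue_spec hfq i
  exact le_trans (le_max_right _ _) (h2 i le_rfl)

lemma queue_rec (hfq : FinQ a s) (i : ℤ) :
    queue a s i = max (queue a s (i - 1) + a i - s i) 0 := by
  obtain ⟨⟨j, hj, hje⟩, hub⟩ := queue_spec hfq i
  obtain ⟨⟨j', hj', hje'⟩, hub'⟩ := queue_spec hfq (i - 1)
  have hQ := queue_nonneg hfq (i - 1)
  apply le_antisymm
  · -- upper bound
    rw [hje]
    rcases eq_or_lt_of_le hj with rfl | hlt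
    · have : cnt a j j - cnt s j j = 0 + (a j - s j) := by
        simp [cnt]
      rw [this]
      have : (0 : ℤ) ≤ queue a s (j - 1) := hQ
      apply max_le_max _ le_rfl
      omega
    · have hji : j ≤ i - 1 := by omega
      rw [cnt_succ a hj, cnt_succ s hj]
      have h1 : cnt a j (i-1) - cnt s j (i-1) ≤ queue a s (i - 1) :=
        le_trans (le_max_left _ _) (hub' j hji)
      apply max_le_max _ le_rfl
      omega
  · -- lower bound
    rcases lt_or_eq_of_le hQ with hpos | hzero
    · -- queue (i-1) > 0, attained with diff = queue (i-1)
      have hdiff : cnt a j' (i-1) - cnt s j' (i-1) = queue a s (i-1) := by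
        rcases max_cases (cnt a j' (i-1) - cnt s j' (i-1)) 0 with ⟨h1,h2⟩|⟨h1,h2⟩
        · omega
        · omega
      have hji : j' ≤ i := by omega
      have := hub j' hji
      rw [cnt_succ a hji, cnt_succ s hji] at this
      have h1 : cnt a j' (i-1) + a i - (cnt s j' (i-1) + s i) ≤ queue a s i :=
        le_trans (le_max_left _ _) this
      have h0 : (0:ℤ) ≤ queue a s i := le_trans (le_max_right _ _) this
      have h2 : queue a s (i-1) + a i - s i ≤ queue a s i := by omega
      exact max_le h2 h0
    · -- queue (i-1) = 0
      have := hub i le_rfl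
      have hcc : cnt a i i - cnt s i i = a i - s i := by simp [cnt]
      rw [hcc] at this
      have h1 : a i - s i ≤ queue a s i := le_trans (le_max_left _ _) this
      have h0 : (0:ℤ) ≤ queue a s i := le_trans (le_max_right _ _) this
      have h2 : queue a s (i-1) + a i - s i ≤ queue a s i := by omega
      exact max_le h2 h0
end Queue

section Maps
variable {a s : Config}

lemma queue_facts (hfq : FinQ a s) (i : ℤ) :
    queue a s (i-1) + a i - s i ≤ queue a s i ∧ 0 ≤ queue a s i ∧
    (queue a s i = queue a s (i-1) + a i - s i ∨ queue a s i = 0) := by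
  have hrec := queue_rec hfq i
  refine ⟨hrec ▸ le_max_left _ _, hrec ▸ le_max_right _ _, ?_⟩
  rcases max_cases (queue a s (i-1) + a i - s i) (0:ℤ) with ⟨h1,h2⟩|⟨h1,h2⟩ <;>
    rw [hrec, h1] <;> simp

lemma dep_eq (hfq : FinQ a s) (ha : IsConfig a) (hs : IsConfig s) (i : ℤ) :
    dep a s i = a i + queue a s (i-1) - queue a s i := by
  obtain ⟨hub1, hub0, hor⟩ := queue_facts hfq i
  have hQ := queue_nonneg hfq (i - 1)
  unfold dep
  split_ifs with h
  · obtain ⟨h3, h4 | h4⟩ := h <;> rcases ha i with hA|hA <;>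
      rcases hor with hor|hor <;> omega
  · push_neg at h
    rcases hs i with hS | hS
    · rcases ha i with hA|hA <;> rcases hor with hor|hor <;> omega
    · obtain ⟨h6, h7⟩ := h hS
      rcases ha i with hA|hA <;> rcases hor with hor|hor <;> omega

lemma unused_eq (hfq : FinQ a s) (ha : IsConfig a) (hs : IsConfig s) (i : ℤ) :
    unusedSrv a s i = s i - dep a s i := by
  have hQ := queue_nonneg hfq (i - 1)
  unfold unusedSrv dep
  split_ifs with h h' h'
  · obtain ⟨h1, h2, h3⟩ := h
    obtain ⟨-, h4 | h4⟩ := h' <;> omega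
  · obtain ⟨h1, h2, h3⟩ := h; omega
  · obtain ⟨h1, h4⟩ := h'; omega
  · push_neg at h h'
    rcases hs i with hS | hS
    · omega
    · rcases ha i with hA | hA
      · have := h hS
        have := h' hS
        omega
      · have := h' hS
        omega

lemma unused_queue (hfq : FinQ a s) {i : ℤ} (hu : unusedSrv a s i = 1) :
    queue a s (i-1) = 0 ∧ queue a s i = 0 := by
  obtain ⟨hub1, hub0, hor⟩ := queue_facts hfq i
  unfold unusedSrv at hu
  split_ifs at hu with h
  · obtain ⟨h1, h2, h3⟩ := h
    rcases hor with hor|hor <;> omega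
  · omega

lemma unused_isConfig (a s : Config) : IsConfig (unusedSrv a s) := by
  intro i; unfold unusedSrv; split_ifs <;> simp

lemma sum_telescope_int (f : ℤ → ℤ) (l : ℤ) :
    ∀ m, l - 1 ≤ m → ∑ k ∈ Finset.Icc l m, (f (k-1) - f k) = f (l-1) - f m := by
  refine Int.le_induction ?_ ?_
  · rw [Finset.Icc_eq_empty (by omega)]
    simp
  · intro m hm ih
    have hsucc := cnt_succ (fun k => f (k-1) - f k) (j := l) (i := m + 1) (by omega)
    unfold cnt at hsucc
    rw [show m + 1 - 1 = m by ring] at hsucc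
    rw [hsucc, ih]
    show f (l - 1) - f m + (f m - f (m + 1)) = f (l - 1) - f (m + 1)
    ring

lemma cnt_dep (hfq : FinQ a s) (ha : IsConfig a) (hs : IsConfig s) {l m : ℤ}
    (h : l - 1 ≤ m) :
    cnt (dep a s) l m = cnt a l m + queue a s (l-1) - queue a s m := by
  unfold cnt
  have : ∀ k ∈ Finset.Icc l m, dep a s k = a k + (queue a s (k-1) - queue a s k) := by
    intro k _
    have := dep_eq hfq ha hs k
    omega
  rw [Finset.sum_congr rfl this, Finset.sum_add_distrib,
    sum_telescope_int (queue a s) l m h]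
  ring

lemma cnt_unused (hfq : FinQ a s) (ha : IsConfig a) (hs : IsConfig s) (l m : ℤ) :
    cnt (unusedSrv a s) l m = cnt s l m - cnt (dep a s) l m := by
  unfold cnt
  rw [← Finset.sum_sub_distrib]
  exact Finset.sum_congr rfl fun k _ => unused_eq hfq ha hs k

lemma cnt_nonneg {x : Config} (hx : IsConfig x) (l m : ℤ) : 0 ≤ cnt x l m := by
  unfold cnt
  apply Finset.sum_nonneg
  intro k _
  rcases hx k with h|h <;> omega

end Maps

lemma cnt_Rmap (a s : Config) (l m : ℤ) :
    cnt (Rmap a s) l m = cnt a l m + cnt (unusedSrv a s) l m := by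
  unfold cnt Rmap
  rw [← Finset.sum_add_distrib]

/-- With `d = D(a,s)` and `r = R(a,s)`, for all `s₀ < t`,
`min_{ℓ ∈ [s₀,t]} (a[s₀,ℓ−1] + s[ℓ,t−1]) = min_{ℓ ∈ [s₀,t]} (r[s₀,ℓ−1] + d[ℓ,t−1])`. -/
theorem stmt9 (a s : Config) (ha : IsConfig a) (hs : IsConfig s) (hfq : FinQ a s) :
    ∀ s₀ t : ℤ, ∀ hst : s₀ < t,
      (Finset.Icc s₀ t).inf' (Finset.nonempty_Icc.mpr hst.le)
          (fun l => cnt a s₀ (l - 1) + cnt s l (t - 1))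
        = (Finset.Icc s₀ t).inf' (Finset.nonempty_Icc.mpr hst.le)
          (fun l => cnt (Rmap a s) s₀ (l - 1) + cnt (dep a s) l (t - 1)) := by
  intro s₀ t hst
  obtain ⟨C, hC⟩ : ∃ C, C = cnt a s₀ (t - 1) - queue a s (t - 1) := ⟨_, rfl⟩
  have hF : ∀ l, s₀ ≤ l → l ≤ t →
      cnt a s₀ (l - 1) + cnt s l (t - 1)
        = C + (queue a s (l - 1) + cnt (unusedSrv a s) l (t - 1)) := by
    intro l hl1 hl2
    have h1 := cnt_unused hfq ha hs l (t - 1)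
    have h2 := cnt_dep hfq ha hs (l := l) (m := t - 1) (by omega)
    have h3 := cnt_split a (i := s₀) (j := l) (k := t - 1) hl1 (by omega)
    omega
  have hG : ∀ l, s₀ ≤ l → l ≤ t →
      cnt (Rmap a s) s₀ (l - 1) + cnt (dep a s) l (t - 1)
        = C + (queue a s (l - 1) + cnt (unusedSrv a s) s₀ (l - 1)) := by
    intro l hl1 hl2
    have h1 := cnt_Rmap a s s₀ (l - 1)
    have h2 := cnt_dep hfq ha hs (l := l) (m := t - 1) (by omega)
    have h3 := cnt_split a (i := s₀) (j := l) (k := t - 1) hl1 (by omega)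
    omega
  have hQn : ∀ i : ℤ, 0 ≤ queue a s i := queue_nonneg hfq
  have hun : ∀ l m : ℤ, 0 ≤ cnt (unusedSrv a s) l m := cnt_nonneg (unused_isConfig a s)
  by_cases hA : ∀ i ∈ Finset.Icc s₀ (t - 1), unusedSrv a s i = 0
  case pos =>
    apply Finset.inf'_congr _ rfl
    intro l hl
    rw [Finset.mem_Icc] at hl
    have e1 : cnt (unusedSrv a s) l (t - 1) = 0 := by
      apply Finset.sum_eq_zero
      intro k hk
      rw [Finset.mem_Icc] at hk
      exact hA k (Finset.mem_Icc.mpr ⟨by omega, hk.2⟩)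
    have e2 : cnt (unusedSrv a s) s₀ (l - 1) = 0 := by
      apply Finset.sum_eq_zero
      intro k hk
      rw [Finset.mem_Icc] at hk
      exact hA k (Finset.mem_Icc.mpr ⟨hk.1, by omega⟩)
    rw [hF l hl.1 hl.2, hG l hl.1 hl.2, e1, e2]
  case neg =>
    push_neg at hA
    have hTne : ((Finset.Icc s₀ (t - 1)).filter
        (fun i => unusedSrv a s i = 1)).Nonempty := by
      obtain ⟨i, hi, hine⟩ := hA
      refine ⟨i, Finset.mem_filter.mpr ⟨hi, ?_⟩⟩
      rcases unused_isConfig a s i with h | h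
      · exact absurd h hine
      · exact h
    have hFC : (Finset.Icc s₀ t).inf' (Finset.nonempty_Icc.mpr hst.le)
        (fun l => cnt a s₀ (l - 1) + cnt s l (t - 1)) = C := by
      obtain ⟨imax, hmem, hmax⟩ :
          ∃ m ∈ (Finset.Icc s₀ (t - 1)).filter (fun i => unusedSrv a s i = 1),
            ∀ k ∈ (Finset.Icc s₀ (t - 1)).filter (fun i => unusedSrv a s i = 1),
              k ≤ m :=
        ⟨_, Finset.max'_mem _ hTne, fun k hk => Finset.le_max' _ k hk⟩
      obtain ⟨hmi, hm3⟩ := Finset.mem_filter.mp hmem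
      rw [Finset.mem_Icc] at hmi
      apply le_antisymm
      · have hmem' : imax + 1 ∈ Finset.Icc s₀ t :=
          Finset.mem_Icc.mpr ⟨by omega, by omega⟩
        refine le_trans (Finset.inf'_le _ hmem') ?_
        have hq0 : queue a s imax = 0 := (unused_queue hfq hm3).2
        have hcz : cnt (unusedSrv a s) (imax + 1) (t - 1) = 0 := by
          apply Finset.sum_eq_zero
          intro k hk
          rw [Finset.mem_Icc] at hk
          rcases unused_isConfig a s k with h | h
          · exact h
          · exfalso
            have := hmax k (Finset.mem_filter.mpr
              ⟨Finset.mem_Icc.mpr ⟨by omega, hk.2⟩, h⟩)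
            omega
        rw [hF (imax + 1) (by omega) (by omega),
          show imax + 1 - 1 = imax by ring, hq0, hcz]
        omega
      · apply Finset.le_inf'
        intro l hl
        rw [Finset.mem_Icc] at hl
        rw [hF l hl.1 hl.2]
        have := hQn (l - 1)
        have := hun l (t - 1)
        omega
    have hGC : (Finset.Icc s₀ t).inf' (Finset.nonempty_Icc.mpr hst.le)
        (fun l => cnt (Rmap a s) s₀ (l - 1) + cnt (dep a s) l (t - 1)) = C := by
      obtain ⟨imin, hmem, hmin⟩ :
          ∃ m ∈ (Finset.Icc s₀ (t - 1)).filter (fun i => unusedSrv a s i = 1),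
            ∀ k ∈ (Finset.Icc s₀ (t - 1)).filter (fun i => unusedSrv a s i = 1),
              m ≤ k :=
        ⟨_, Finset.min'_mem _ hTne, fun k hk => Finset.min'_le _ k hk⟩
      obtain ⟨hmi, hm3⟩ := Finset.mem_filter.mp hmem
      rw [Finset.mem_Icc] at hmi
      apply le_antisymm
      · have hmem' : imin ∈ Finset.Icc s₀ t := Finset.mem_Icc.mpr ⟨hmi.1, by omega⟩
        refine le_trans (Finset.inf'_le _ hmem') ?_
        have hq0 : queue a s (imin - 1) = 0 := (unused_queue hfq hm3).1
        have hcz : cnt (unusedSrv a s) s₀ (imin - 1) = 0 := by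
          apply Finset.sum_eq_zero
          intro k hk
          rw [Finset.mem_Icc] at hk
          rcases unused_isConfig a s k with h | h
          · exact h
          · exfalso
            have := hmin k (Finset.mem_filter.mpr
              ⟨Finset.mem_Icc.mpr ⟨hk.1, by omega⟩, h⟩)
            omega
        rw [hG imin hmi.1 (by omega), hq0, hcz]
        omega
      · apply Finset.le_inf'
        intro l hl
        rw [Finset.mem_Icc] at hl
        rw [hG l hl.1 hl.2]
        have := hQn (l - 1)
        have := hun s₀ (l - 1)
        omega
    rw [hFC, hGC]
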